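/- Every subspace X of an ordinal λ + 1 (with the order topology) having countable extent is exponentially separable. -/

import Mathlib

/-- A space is exponentially separable. -/
def ExpSep (X : Type*) [TopologicalSpace X] : Prop :=
  ∀ F : Set (Set X), F.Countable → (∀ C ∈ F, IsClosed C) →
    ∃ A : Set X, A.Countable ∧ ∀ G ⊆ F, (⋂₀ G).Nonempty → (A ∩ ⋂₀ G).Nonempty

section ExpSepAux
open Set Order

theorem isOpen_Iic_ord (a : Ordinal) : IsOpen (Iic a) := by
  rw [← Order.Iio_succ a]; exact isOpen_Iio

theorem isClosed_Ioi_ord (a : Ordinal) : IsClosed (Ioi a) := by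
  rw [← Set.compl_Iic]; exact (isOpen_Iic_ord a).isClosed_compl

theorem lt_add_one_ord (a : Ordinal) : a < a + 1 := by
  rw [Ordinal.add_one_eq_succ]; exact Order.lt_succ a

def ExtA (X : Set Ordinal) : Prop :=
  ∀ D ⊆ X, (∀ x ∈ X, ∃ U, IsOpen U ∧ x ∈ U ∧ ∀ d ∈ D, d ∈ U → d = x) → D.Countable

theorem ExtA.inter {X : Set Ordinal} (h : ExtA X) {V : Set Ordinal} (_hVo : IsOpen V)
    (hVc : IsClosed V) : ExtA (X ∩ V) := by
  intro D hD hprop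
  apply h D (hD.trans inter_subset_left)
  intro x hx
  by_cases hxV : x ∈ V
  · exact hprop x ⟨hx, hxV⟩
  · exact ⟨Vᶜ, hVc.isOpen_compl, hxV, fun d hd hdV => absurd (hD hd).2 hdV⟩

theorem ExtA.interIic {X : Set Ordinal} (h : ExtA X) (b : Ordinal) : ExtA (X ∩ Iic b) :=
  h.inter (isOpen_Iic_ord b) isClosed_Iic

theorem ExtA.interIoc {X : Set Ordinal} (h : ExtA X) (a b : Ordinal) : ExtA (X ∩ Ioc a b) := by
  have : Ioc a b = Ioi a ∩ Iic b := (Set.Ioi_inter_Iic).symm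
  rw [this]
  exact h.inter (isOpen_Ioi.inter (isOpen_Iic_ord b)) ((isClosed_Ioi_ord a).inter isClosed_Iic)

/-- A point which is approached from below by a closed set belongs to it. -/
theorem mem_of_closed_unbdd {C : Set Ordinal} (hC : IsClosed C) {z : Ordinal} (hz0 : z ≠ 0)
    (hunb : ∀ y < z, ∃ c ∈ C, y < c ∧ c < z) : z ∈ C := by
  by_contra hzC
  have hzlim : Order.IsSuccLimit z := by
    refine Ordinal.isSuccLimit_iff.2 ⟨hz0, Order.isSuccPrelimit_of_succ_lt fun a ha => ?_⟩
    obtain ⟨c, _, hac, hcz⟩ := hunb a ha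
    exact lt_of_le_of_lt (Order.succ_le_of_lt hac) hcz
  obtain ⟨a, haz, hIoo⟩ := (Ordinal.isOpen_iff.1 hC.isOpen_compl) z hzC hzlim
  obtain ⟨c, hcC, hac, hcz⟩ := hunb a haz
  exact (hIoo ⟨hac, hcz⟩) hcC

theorem expSep_main (l : Ordinal) : ∀ X : Set Ordinal, X ⊆ Iic l → ExtA X →
    ∀ F : Set (Set Ordinal), F.Countable → (∀ C ∈ F, IsClosed C) →
    ∃ A : Set Ordinal, A ⊆ X ∧ A.Countable ∧
      ∀ x ∈ X, ∃ a ∈ A, ∀ C ∈ F, x ∈ C → a ∈ C := by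
  induction l using Ordinal.induction with
  | h l IH =>
  intro X hXl hExt F hFc hFcl
  by_cases hXcnt : X.Countable
  · exact ⟨X, subset_rfl, hXcnt, fun x hx => ⟨x, hx, fun C _ h => h⟩⟩
  by_cases hcof : ∃ g : ℕ → Ordinal, (∀ n, g n < l) ∧ ∀ y < l, ∃ n, y ≤ g n
  -- Case A : countable cofinal sequence
  · obtain ⟨g, hg1, hg2⟩ := hcof
    have IH' : ∀ n : ℕ, ∃ A : Set Ordinal, A ⊆ X ∩ Iic (g n) ∧ A.Countable ∧
        ∀ x ∈ X ∩ Iic (g n), ∃ a ∈ A, ∀ C ∈ F, x ∈ C → a ∈ C := fun n =>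
      IH (g n) (hg1 n) (X ∩ Iic (g n)) inter_subset_right (hExt.interIic _) F hFc hFcl
    choose As hAs1 hAs2 hAs3 using IH'
    refine ⟨(⋃ n, As n) ∪ (X ∩ {l}), ?_, ?_, ?_⟩
    · apply union_subset
      · exact iUnion_subset fun n => (hAs1 n).trans inter_subset_left
      · exact inter_subset_left
    · exact Set.Countable.union (Set.countable_iUnion hAs2) ((Set.countable_singleton l).mono Set.inter_subset_right)
    · intro x hx
      rcases eq_or_lt_of_le (show x ≤ l from hXl hx) with h | h
      · exact ⟨x, Or.inr ⟨hx, h⟩, fun C _ hC => hC⟩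
      · obtain ⟨n, hn⟩ := hg2 x h
        obtain ⟨a, ha, hap⟩ := hAs3 n x ⟨hx, hn⟩
        exact ⟨a, Or.inl (mem_iUnion.2 ⟨n, ha⟩), hap⟩
  -- Case B : every countable subset of Iio l is bounded below l
  · have hl0 : 0 < l := by
      rcases eq_zero_or_pos l with rfl | h
      · refine absurd (((countable_singleton 0).mono ?_) : X.Countable) hXcnt
        intro x hx
        simpa [nonpos_iff_eq_zero] using hXl hx
      · exact h
    have hlim : ∀ y < l, y + 1 < l := by
      intro y hy
      rcases lt_or_ge (y + 1) l with h | h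
      · exact h
      exfalso
      apply hcof
      refine ⟨fun _ => y, fun _ => hy, fun z hz => ⟨0, ?_⟩⟩
      have : z < y + 1 := lt_of_lt_of_le hz h
      rwa [Ordinal.add_one_eq_succ, Order.lt_succ_iff] at this
    have hB : ∀ s : Set Ordinal, s.Countable → (∀ c ∈ s, c < l) → ∃ y, y < l ∧ ∀ c ∈ s, c ≤ y := by
      intro s hsc hsl
      rcases s.eq_empty_or_nonempty with rfl | hne
      · exact ⟨0, hl0, by simp⟩
      obtain ⟨g, rfl⟩ := hsc.exists_eq_range hne
      by_contra hcon
      push_neg at hcon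
      apply hcof
      refine ⟨g, fun n => hsl _ (mem_range_self n), fun y hy => ?_⟩
      obtain ⟨c, ⟨n, rfl⟩, hc⟩ := hcon y hy
      exact ⟨n, hc.le⟩
    -- the unbounded members of F
    set Fu : Set (Set Ordinal) := {C | C ∈ F ∧ ∀ y < l, ∃ c ∈ C, y < c ∧ c < l} with hFudef
    have hFuF : Fu ⊆ F := fun C hC => hC.1
    -- bounds for the bounded members
    have hFbB : ∀ C : Set Ordinal, ∃ y, y < l ∧ ((C ∈ F ∧ C ∉ Fu) → ∀ c ∈ C, c < l → c ≤ y) := by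
      intro C
      by_cases hC : C ∈ F ∧ C ∉ Fu
      · have h1 : ¬ ∀ y < l, ∃ c ∈ C, y < c ∧ c < l := fun h => hC.2 ⟨hC.1, h⟩
        push_neg at h1
        obtain ⟨y, hy, h⟩ := h1
        refine ⟨y, hy, fun _ c hc hcl => ?_⟩
        by_contra hyc
        exact absurd hcl (not_lt.2 (h c hc (not_le.1 hyc)))
      · exact ⟨0, hl0, fun h => absurd h hC⟩
    choose yb hyb1 hyb2 using hFbB
    obtain ⟨β, hβl, hβ⟩ := hB (yb '' F) (hFc.image _) (by rintro _ ⟨C, _, rfl⟩; exact hyb1 C)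
    have hKey : ∀ C ∈ F, ∀ x, x ∈ C → β < x → x < l → C ∈ Fu := by
      intro C hC x hxC hβx hxl
      by_contra hCu
      have h1 : x ≤ yb C := hyb2 C ⟨hC, hCu⟩ x hxC hxl
      have h2 : yb C ≤ β := hβ _ (mem_image_of_mem yb hC)
      exact absurd (h1.trans h2) (not_le.2 hβx)
    -- the set E of "diagonal limit" points
    set E : Set Ordinal := {δ | δ < l ∧ β < δ ∧ ∀ C ∈ Fu, ∀ y < δ, ∃ c ∈ C, y < c ∧ c < δ}
      with hEdef
    have hEcl : ∀ x, x < l → β < x → (∀ y < x, ∃ e ∈ E, y < e ∧ e < x) → x ∈ E := by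
      intro x hxl hβx h
      refine ⟨hxl, hβx, fun C hC y hy => ?_⟩
      obtain ⟨e, heE, hye, hex⟩ := h y hy
      obtain ⟨c, hcC, hyc, hce⟩ := heE.2.2 C hC y hye
      exact ⟨c, hcC, hyc, hce.trans hex⟩
    have hEunb : ∀ y < l, ∃ e ∈ E, y < e := by
      intro y0 hy0
      have hm0 : max y0 β + 1 < l := hlim _ (max_lt hy0 hβl)
      have hy0m : y0 < max y0 β + 1 := lt_of_le_of_lt (le_max_left _ _) (lt_add_one_ord _)
      have hβm : β < max y0 β + 1 := lt_of_le_of_lt (le_max_right _ _) (lt_add_one_ord _)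
      rcases Set.eq_empty_or_nonempty Fu with hFuE | hFuN
      · exact ⟨max y0 β + 1, ⟨hm0, hβm, fun C hC => by rw [hFuE] at hC; exact absurd hC (notMem_empty C)⟩, hy0m⟩
      obtain ⟨gC, hgC⟩ := (hFc.mono hFuF).exists_eq_range hFuN
      have hgmem : ∀ n, gC n ∈ Fu := fun n => hgC ▸ mem_range_self n
      have hptE : ∀ (n : ℕ) (y : Ordinal), ∃ c, y < l → c ∈ gC n ∧ y < c ∧ c < l := by
        intro n y
        by_cases hy : y < l
        · obtain ⟨c, h1, h2, h3⟩ := (hgmem n).2 y hy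
          exact ⟨c, fun _ => ⟨h1, h2, h3⟩⟩
        · exact ⟨0, fun h => absurd h hy⟩
      choose pt hpt using hptE
      have hbdE : ∀ z : Ordinal, ∃ b, b < l ∧ (z < l → z < b ∧ ∀ n, pt n z < b) := by
        intro z
        by_cases hz : z < l
        · have hmem : ∀ c ∈ insert z (range fun n => pt n z), c < l := by
            rintro c hc
            rcases hc with rfl | ⟨n, rfl⟩
            · exact hz
            · exact (hpt n z hz).2.2
          obtain ⟨y, hy, hyb⟩ := hB (insert z (range fun n => pt n z))
            ((countable_range _).insert z) hmem
          refine ⟨y + 1, hlim y hy, fun _ => ⟨?_, fun n => ?_⟩⟩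
          · exact lt_of_le_of_lt (hyb z (mem_insert _ _)) (lt_add_one_ord y)
          · exact lt_of_le_of_lt (hyb _ (mem_insert_of_mem _ (mem_range_self n))) (lt_add_one_ord y)
        · exact ⟨0, hl0, fun h => absurd h hz⟩
      choose bd hbd1 hbd2 using hbdE
      set h : ℕ → Ordinal := fun k => Nat.rec (max y0 β + 1) (fun _ z => bd z) k with hhdef
      have hlt : ∀ k, h k < l := by
        intro k
        induction k with
        | zero => exact hm0
        | succ k _ => exact hbd1 (h k)
      have hstep : ∀ k, h k < h (k + 1) := fun k => (hbd2 (h k) (hlt k)).1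
      have hptlt : ∀ n k, pt n (h k) < h (k + 1) := fun n k => (hbd2 (h k) (hlt k)).2 n
      have hbdd : BddAbove (range h) := ⟨l, by rintro _ ⟨k, rfl⟩; exact (hlt k).le⟩
      set e := sSup (range h) with hedef
      have h0e : h 0 ≤ e := le_csSup hbdd (mem_range_self 0)
      have hel : e < l := by
        obtain ⟨y, hy, hyb⟩ := hB (range h) (countable_range h) (by rintro _ ⟨k, rfl⟩; exact hlt k)
        exact lt_of_le_of_lt (csSup_le ⟨h 0, mem_range_self 0⟩ (by rintro _ ⟨k, rfl⟩; exact hyb _ (mem_range_self k))) hy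
      have hβe : β < e := lt_of_lt_of_le hβm h0e
      refine ⟨e, ⟨hel, hβe, ?_⟩, lt_of_lt_of_le hy0m h0e⟩
      intro C hC y hye
      obtain ⟨n, hn⟩ : ∃ n, gC n = C := by rwa [hgC, mem_range] at hC
      obtain ⟨k, hk⟩ : ∃ k, y < h k := by
        by_contra hcon
        push_neg at hcon
        exact absurd (csSup_le ⟨h 0, mem_range_self 0⟩ (by rintro _ ⟨k, rfl⟩; exact hcon k)) (not_le.2 hye)
      obtain ⟨hc1, hc2, _⟩ := hpt n (h k) (hlt k)
      refine ⟨pt n (h k), hn ▸ hc1, hk.trans hc2, ?_⟩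
      exact lt_of_lt_of_le (hptlt n k) (le_csSup hbdd (mem_range_self (k + 1)))
    -- absorption lemmas
    have habsorbE : ∀ z ∈ E, ∀ x ∈ X, β < x → x < l → ∀ C ∈ F, x ∈ C → z ∈ C := by
      intro z hz x hxX hβx hxl C hC hxC
      have hCu : C ∈ Fu := hKey C hC x hxC hβx hxl
      have hz0 : z ≠ 0 := (pos_iff_ne_zero.1 (lt_of_le_of_lt (zero_le (a := β)) hz.2.1))
      exact mem_of_closed_unbdd (hFcl C hC) hz0 (hz.2.2 C hCu)
    have habsorbL : ∀ x ∈ X, β < x → ∀ C ∈ F, x ∈ C → l ∈ C := by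
      intro x hxX hβx C hC hxC
      rcases eq_or_lt_of_le (show x ≤ l from hXl hxX) with h | h
      · exact h ▸ hxC
      have hCu : C ∈ Fu := hKey C hC x hxC hβx h
      exact mem_of_closed_unbdd (hFcl C hC) (pos_iff_ne_zero.1 hl0) hCu.2
    -- Subcase: l ∈ X
    by_cases hlX : l ∈ X
    · obtain ⟨A0, hA01, hA02, hA03⟩ := IH β hβl (X ∩ Iic β) inter_subset_right
        (hExt.interIic β) F hFc hFcl
      refine ⟨A0 ∪ {l}, ?_, hA02.union (countable_singleton l), ?_⟩
      · apply union_subset (hA01.trans inter_subset_left)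
        exact singleton_subset_iff.2 hlX
      · intro x hx
        rcases le_or_gt x β with h | h
        · obtain ⟨a, ha, hap⟩ := hA03 x ⟨hx, h⟩
          exact ⟨a, Or.inl ha, hap⟩
        · exact ⟨l, Or.inr rfl, fun C hC hxC => habsorbL x hx h C hC hxC⟩
    -- Subcase: some point of E is in X
    by_cases hEX : (X ∩ E).Nonempty
    · obtain ⟨z, hzX, hzE⟩ := hEX
      obtain ⟨A0, hA01, hA02, hA03⟩ := IH β hβl (X ∩ Iic β) inter_subset_right
        (hExt.interIic β) F hFc hFcl
      refine ⟨A0 ∪ {z}, ?_, hA02.union (countable_singleton z), ?_⟩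
      · apply union_subset (hA01.trans inter_subset_left)
        exact singleton_subset_iff.2 hzX
      · intro x hx
        rcases le_or_gt x β with h | h
        · obtain ⟨a, ha, hap⟩ := hA03 x ⟨hx, h⟩
          exact ⟨a, Or.inl ha, hap⟩
        · have hxl : x < l := lt_of_le_of_ne (hXl hx) (fun he => hlX (he ▸ hx))
          exact ⟨z, Or.inr rfl, fun C hC hxC => habsorbE z hzE x hx h hxl C hC hxC⟩
    -- Subcase: X misses E (and l); decompose into countably many clopen pieces
    have hXE : ∀ x ∈ X, x ∉ E := fun x hx hxE => hEX ⟨x, hx, hxE⟩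
    have hXlt : ∀ x ∈ X, x < l := fun x hx =>
      lt_of_le_of_ne (hXl hx) (fun he => hlX (he ▸ hx))
    obtain ⟨e0, he0E, _⟩ := hEunb 0 hl0
    set nxt : Ordinal → Ordinal := fun e => sInf (E ∩ Ioi e) with hnxtdef
    have hnxtmem : ∀ e < l, nxt e ∈ E ∩ Ioi e := by
      intro e hel
      obtain ⟨e', he', hee'⟩ := hEunb e hel
      exact csInf_mem ⟨e', he', hee'⟩
    have hnxtle : ∀ e, ∀ e' ∈ E ∩ Ioi e, nxt e ≤ e' := fun e e' h => csInf_le' h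
    set P : Ordinal → Set Ordinal := fun e => X ∩ Ioc e (nxt e) with hPdef
    set J : Set Ordinal := {e | e ∈ E ∧ e0 ≤ e ∧ (P e).Nonempty} with hJdef
    -- locating each big point of X in a piece
    have hsig : ∀ x ∈ X, e0 < x → ∃ e, e ∈ E ∧ e0 ≤ e ∧ e < x ∧ x ≤ nxt e := by
      intro x hxX he0x
      have hxl : x < l := hXlt x hxX
      set s : Set Ordinal := E ∩ Ici e0 ∩ Iio x with hsdef
      have hsne : s.Nonempty := ⟨e0, ⟨he0E, Set.self_mem_Ici⟩, he0x⟩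
      have hsbdd : BddAbove s := ⟨x, fun c hc => hc.2.le⟩
      set σ := sSup s with hσdef
      have hσx : σ ≤ x := csSup_le hsne (fun b hb => hb.2.le)
      have he0σ : e0 ≤ σ := le_csSup hsbdd ⟨⟨he0E, Set.self_mem_Ici⟩, he0x⟩
      have hβσ : β < σ := lt_of_lt_of_le he0E.2.1 he0σ
      have hσE : σ ∈ E := by
        by_cases hσs : σ ∈ s
        · exact hσs.1.1
        · refine hEcl σ (lt_of_le_of_lt hσx hxl) hβσ ?_
          intro y hy
          obtain ⟨e, hes, hye⟩ := exists_lt_of_lt_csSup hsne hy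
          exact ⟨e, hes.1.1, hye, lt_of_le_of_ne (le_csSup hsbdd hes) (fun h => hσs (h ▸ hes))⟩
      have hσx' : σ < x := lt_of_le_of_ne hσx (fun h => (hXE x hxX) (h ▸ hσE))
      refine ⟨σ, hσE, he0σ, hσx', ?_⟩
      by_contra hcon
      push_neg at hcon
      have hns : nxt σ ∈ s :=
        ⟨⟨(hnxtmem σ hσE.1).1, he0σ.trans (hnxtmem σ hσE.1).2.le⟩, hcon⟩
      exact absurd (le_csSup hsbdd hns) (not_le.2 (hnxtmem σ hσE.1).2)
    -- one chosen point in each nonempty piece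
    have hdE : ∀ e : Ordinal, ∃ c, (P e).Nonempty → c ∈ P e := by
      intro e
      by_cases h : (P e).Nonempty
      · exact ⟨h.some, fun _ => h.some_mem⟩
      · exact ⟨0, fun hh => absurd hh h⟩
    choose d hdmem using hdE
    set D : Set Ordinal := d '' J with hDdef
    have hDX : D ⊆ X := by rintro _ ⟨e, heJ, rfl⟩; exact (hdmem e heJ.2.2).1
    have hdI : ∀ e ∈ J, e < d e ∧ d e ≤ nxt e := fun e he =>
      ⟨(hdmem e he.2.2).2.1, (hdmem e he.2.2).2.2⟩
    have hDcnt : D.Countable := by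
      apply hExt D hDX
      intro x hxX
      rcases le_or_gt x e0 with hx0 | hx0
      · refine ⟨Iic e0, isOpen_Iic_ord e0, hx0, ?_⟩
        rintro _ ⟨e, heJ, rfl⟩ hdU
        exact absurd (show (e0 : Ordinal) < d e from lt_of_le_of_lt heJ.2.1 (hdI e heJ).1)
          (not_lt.2 hdU)
      · obtain ⟨σ, hσE, he0σ, hσx, hxn⟩ := hsig x hxX hx0
        have hU0 : IsOpen (Ioc σ (nxt σ)) := by
          rw [← Set.Ioi_inter_Iic]
          exact isOpen_Ioi.inter (isOpen_Iic_ord _)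
        have hU0D : ∀ e ∈ J, d e ∈ Ioc σ (nxt σ) → e = σ := by
          intro e heJ hdU
          rcases lt_trichotomy e σ with h | h | h
          · exfalso
            have h1 : nxt e ≤ σ := hnxtle e σ ⟨hσE, h⟩
            exact absurd (lt_of_le_of_lt ((hdI e heJ).2.trans h1) hdU.1) (lt_irrefl _)
          · exact h
          · exfalso
            have h1 : nxt σ ≤ e := hnxtle σ e ⟨heJ.1, h⟩
            exact absurd (lt_of_le_of_lt h1 (hdI e heJ).1) (not_lt.2 hdU.2)
        by_cases hxd : d σ = x
        · refine ⟨Ioc σ (nxt σ), hU0, ⟨hσx, hxn⟩, ?_⟩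
          rintro _ ⟨e, heJ, rfl⟩ hdU
          rw [hU0D e heJ hdU]
          exact hxd
        · refine ⟨Ioc σ (nxt σ) \ {d σ}, hU0.sdiff isClosed_singleton,
            ⟨⟨hσx, hxn⟩, fun h => hxd (mem_singleton_iff.1 h).symm⟩, ?_⟩
          rintro _ ⟨e, heJ, rfl⟩ ⟨hdU, hne⟩
          exact absurd (mem_singleton_iff.2 (by rw [hU0D e heJ hdU])) hne
    have hJcnt : J.Countable := by
      refine Set.countable_of_injective_of_countable_image (f := d) ?_ (hDcnt.mono ?_)
      · intro a ha b hb hab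
        rcases lt_trichotomy a b with h | h | h
        · exfalso
          have h1 : nxt a ≤ b := hnxtle a b ⟨hb.1, h⟩
          have h2 : d a < d b := lt_of_le_of_lt ((hdI a ha).2.trans h1) (hdI b hb).1
          exact absurd hab (ne_of_lt h2)
        · exact h
        · exfalso
          have h1 : nxt b ≤ a := hnxtle b a ⟨ha.1, h⟩
          have h2 : d b < d a := lt_of_le_of_lt ((hdI b hb).2.trans h1) (hdI a ha).1
          exact absurd hab (ne_of_lt h2).symm
      · exact subset_rfl
    -- IH on each nonempty piece
    have hIH2 : ∀ e : Ordinal, ∃ A : Set Ordinal, e ∈ J → A ⊆ X ∩ Ioc e (nxt e) ∧ A.Countable ∧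
        ∀ x ∈ X ∩ Ioc e (nxt e), ∃ a ∈ A, ∀ C ∈ F, x ∈ C → a ∈ C := by
      intro e
      by_cases he : e ∈ J
      · have hnl : nxt e < l := (hnxtmem e he.1.1).1.1
        obtain ⟨A, h1, h2, h3⟩ := IH (nxt e) hnl (X ∩ Ioc e (nxt e))
          (fun x hx => hx.2.2) (hExt.interIoc e (nxt e)) F hFc hFcl
        exact ⟨A, fun _ => ⟨h1, h2, h3⟩⟩
      · exact ⟨∅, fun h => absurd h he⟩
    choose Ap hAp using hIH2
    obtain ⟨A0, hA01, hA02, hA03⟩ := IH e0 he0E.1 (X ∩ Iic e0) inter_subset_right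
      (hExt.interIic e0) F hFc hFcl
    refine ⟨A0 ∪ ⋃ e ∈ J, Ap e, ?_, ?_, ?_⟩
    · apply union_subset (hA01.trans inter_subset_left)
      exact iUnion₂_subset fun e he => ((hAp e he).1).trans inter_subset_left
    · exact hA02.union (hJcnt.biUnion fun e he => (hAp e he).2.1)
    · intro x hx
      rcases le_or_gt x e0 with h | h
      · obtain ⟨a, ha, hap⟩ := hA03 x ⟨hx, h⟩
        exact ⟨a, Or.inl ha, hap⟩
      · obtain ⟨σ, hσE, he0σ, hσx, hxn⟩ := hsig x hx h
        have hσJ : σ ∈ J := ⟨hσE, he0σ, ⟨x, hx, hσx, hxn⟩⟩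
        obtain ⟨a, ha, hap⟩ := (hAp σ hσJ).2.2 x ⟨hx, hσx, hxn⟩
        exact ⟨a, Or.inr (mem_iUnion₂.2 ⟨σ, hσJ, ha⟩), hap⟩

theorem extA_of_ext (X : Set Ordinal)
    (hext : ∀ D : Set X, IsClosed D → DiscreteTopology D → D.Countable) : ExtA X := by
  intro D hDX hU
  have hU' : ∀ x : Ordinal, ∃ U, x ∈ X → IsOpen U ∧ x ∈ U ∧ ∀ d ∈ D, d ∈ U → d = x := by
    intro x
    by_cases hx : x ∈ X
    · obtain ⟨U, h⟩ := hU x hx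
      exact ⟨U, fun _ => h⟩
    · exact ⟨∅, fun h => absurd h hx⟩
  choose U hUp using hU'
  set Dt : Set X := Subtype.val ⁻¹' D with hDtdef
  have h1 : IsClosed Dt := by
    rw [← isOpen_compl_iff]
    have hcompl : Dtᶜ = Subtype.val ⁻¹' (⋃ x ∈ X \ D, U x) := by
      ext ⟨x, hxX⟩
      simp only [mem_compl_iff, mem_preimage, hDtdef, mem_iUnion]
      constructor
      · intro hxD
        exact ⟨x, ⟨hxX, hxD⟩, (hUp x hxX).2.1⟩
      · rintro ⟨y, ⟨hyX, hyD⟩, hxU⟩ hxD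
        exact hyD (((hUp y hyX).2.2 x hxD hxU) ▸ hxD)
    rw [hcompl]
    exact (isOpen_biUnion fun x hx => (hUp x hx.1).1).preimage continuous_subtype_val
  have h2 : DiscreteTopology Dt := by
    rw [discreteTopology_iff_isOpen_singleton]
    rintro ⟨⟨x, hxX⟩, hxD⟩
    have : ({⟨⟨x, hxX⟩, hxD⟩} : Set Dt) =
        (fun y : Dt => (y : X).val) ⁻¹' (U x) := by
      ext ⟨⟨y, hyX⟩, hyD⟩
      simp only [mem_singleton_iff, mem_preimage, Subtype.ext_iff]
      constructor
      · intro h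
        rw [h]
        exact (hUp x hxX).2.1
      · intro hyU
        exact (hUp x hxX).2.2 y hyD hyU
    rw [this]
    exact (hUp x hxX).1.preimage (continuous_subtype_val.comp continuous_subtype_val)
  have hcnt := hext Dt h1 h2
  have hDeq : D = Subtype.val '' Dt := by
    ext y
    simp only [hDtdef, mem_image, mem_preimage]
    constructor
    · intro hy
      exact ⟨⟨y, hDX hy⟩, hy, rfl⟩
    · rintro ⟨⟨z, hz⟩, hzD, rfl⟩
      exact hzD
  rw [hDeq]
  exact hcnt.image _

theorem stmt3 (l : Ordinal) (X : Set Ordinal) (hX : X ⊆ Set.Iic l)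
    (hext : ∀ D : Set X, IsClosed D → DiscreteTopology D → D.Countable) :
    ExpSep X := by
  have hExtA : ExtA X := extA_of_ext X hext
  have main := expSep_main l
  intro Ft hFtc hFtcl
  have hZe : ∀ Ct : Set X, ∃ Z : Set Ordinal, Ct ∈ Ft → IsClosed Z ∧ Subtype.val ⁻¹' Z = Ct := by
    intro Ct
    by_cases h : Ct ∈ Ft
    · obtain ⟨Z, hZ1, hZ2⟩ := isClosed_induced_iff.1 (hFtcl Ct h)
      exact ⟨Z, fun _ => ⟨hZ1, hZ2⟩⟩
    · exact ⟨∅, fun hh => absurd hh h⟩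
  choose Z hZ using hZe
  obtain ⟨A, hAX, hAc, hAp⟩ := main X hX hExtA (Z '' Ft) (hFtc.image Z)
    (by rintro _ ⟨Ct, hCt, rfl⟩; exact (hZ Ct hCt).1)
  refine ⟨Subtype.val ⁻¹' A, hAc.preimage Subtype.val_injective, ?_⟩
  rintro G hG ⟨x, hx⟩
  obtain ⟨a, haA, hap⟩ := hAp (↑x) x.2
  refine ⟨⟨a, hAX haA⟩, haA, ?_⟩
  intro Ct hCt
  have hZC := hZ Ct (hG hCt)
  have hxZ : (x : Ordinal) ∈ Z Ct := by
    have hxCt : x ∈ Ct := hx Ct hCt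
    rw [← hZC.2] at hxCt
    exact hxCt
  have hone := hap (Z Ct) (mem_image_of_mem Z (hG hCt)) hxZ
  show (⟨a, hAX haA⟩ : X) ∈ Ct
  rw [← hZC.2]
  exact hone

end ExpSepAux
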